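/- Let Θ̃ : ℝ⁴ → ℝ be twice continuously differentiable, let a, b ∈ ℝ⁴, and let λ₁, λ₂, λ₃, λ₄ be pairwise distinct real numbers. Define Θ : ℝ⁸ → ℝ by Θ(x,y) := (1/2)Σ_{i,j=1}^{4}(a_i b_j − a_j b_i)x^i y^j + Θ̃(x¹−λ₁y¹,...,x⁴−λ₄y⁴), and define Φ : ℝ⁴ → ℝ by Φ(x) := (1/2)Σ_{i≠j}(a_i b_j − a_j b_i)x^i x^j/(λ_i − λ_j) + Θ̃(x). Then Θ satisfies the TED equation on ℝ⁸ if and only if Φ satisfies the general heavenly equation (λ₂−λ₃)(λ₁−λ₄)Φ_{x²x³}Φ_{x¹x⁴} + (λ₁−λ₃)(λ₄−λ₂)Φ_{x¹x³}Φ_{x⁴x²} + (λ₁−λ₂)(λ₃−λ₄)Φ_{x¹x²}Φ_{x³x⁴} = 0 on ℝ⁴. Moreover, the TED expression of Θ at (x,y) equals the general heavenly expression of Φ evaluated at the point (x¹−λ₁y¹,...,x⁴−λ₄y⁴). -/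

import Mathlib

noncomputable section

/-- `ℝ⁸` with coordinates `(x¹,…,x⁴, y¹,…,y⁴)`. -/
abbrev E8 : Type := (Fin 4 → ℝ) × (Fin 4 → ℝ)

/-- Directional (partial) derivative of `f` in the direction `v`. -/
def pdv {E : Type*} [NormedAddCommGroup E] [NormedSpace ℝ E]
    (v : E) (f : E → ℝ) (z : E) : ℝ := fderiv ℝ f z v

/-- Direction of the coordinate `x^i`. -/
def dx (i : Fin 4) : E8 := (Pi.single i 1, 0)
/-- Direction of the coordinate `y^i`. -/
def dy (i : Fin 4) : E8 := (0, Pi.single i 1)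

/-- `ω_{ij} = Θ_{x^i y^j} − Θ_{x^j y^i}`. -/
def ωc (Θ : E8 → ℝ) (i j : Fin 4) (z : E8) : ℝ :=
  pdv (dx i) (pdv (dy j) Θ) z - pdv (dx j) (pdv (dy i) Θ) z

/-- The left-hand side of the TED equation,
`(Θ_{x¹y²}−Θ_{x²y¹})(Θ_{x³y⁴}−Θ_{x⁴y³}) + (Θ_{x²y³}−Θ_{x³y²})(Θ_{x¹y⁴}−Θ_{x⁴y¹})
  + (Θ_{x³y¹}−Θ_{x¹y³})(Θ_{x²y⁴}−Θ_{x⁴y²})`. -/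
def tedExpr (Θ : E8 → ℝ) (z : E8) : ℝ :=
  ωc Θ 0 1 z * ωc Θ 2 3 z + ωc Θ 1 2 z * ωc Θ 0 3 z + ωc Θ 2 0 z * ωc Θ 1 3 z

/-- Second mixed partial derivative `Φ_{x^i x^j}` of a function on `ℝ⁴`. -/
def pd2 (i j : Fin 4) (Φ : (Fin 4 → ℝ) → ℝ) (x : Fin 4 → ℝ) : ℝ :=
  pdv (Pi.single i 1) (pdv (Pi.single j 1) Φ) x

/-- The left-hand side of the general heavenly equation,
`(λ₂−λ₃)(λ₁−λ₄)Φ_{x²x³}Φ_{x¹x⁴} + (λ₁−λ₃)(λ₄−λ₂)Φ_{x¹x³}Φ_{x⁴x²}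
  + (λ₁−λ₂)(λ₃−λ₄)Φ_{x¹x²}Φ_{x³x⁴}`. -/
def ghExpr (l : Fin 4 → ℝ) (Φ : (Fin 4 → ℝ) → ℝ) (x : Fin 4 → ℝ) : ℝ :=
  (l 1 - l 2) * (l 0 - l 3) * (pd2 1 2 Φ x * pd2 0 3 Φ x)
    + (l 0 - l 2) * (l 3 - l 1) * (pd2 0 2 Φ x * pd2 3 1 Φ x)
    + (l 0 - l 1) * (l 2 - l 3) * (pd2 0 1 Φ x * pd2 2 3 Φ x)

namespace Stmt13Aux

def Xc (i : Fin 4) : E8 →L[ℝ] ℝ :=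
  (ContinuousLinearMap.proj i).comp (ContinuousLinearMap.fst ℝ (Fin 4 → ℝ) (Fin 4 → ℝ))
def Yc (i : Fin 4) : E8 →L[ℝ] ℝ :=
  (ContinuousLinearMap.proj i).comp (ContinuousLinearMap.snd ℝ (Fin 4 → ℝ) (Fin 4 → ℝ))
def Lc (l : Fin 4 → ℝ) : E8 →L[ℝ] (Fin 4 → ℝ) :=
  ContinuousLinearMap.pi fun k => Xc k - l k • Yc k

@[simp] lemma Xc_apply (i : Fin 4) (z : E8) : Xc i z = z.1 i := rfl
@[simp] lemma Yc_apply (i : Fin 4) (z : E8) : Yc i z = z.2 i := rfl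
@[simp] lemma Lc_apply (l : Fin 4 → ℝ) (z : E8) (k : Fin 4) :
    Lc l z k = z.1 k - l k * z.2 k := rfl

lemma Lc_dx (l : Fin 4 → ℝ) (i : Fin 4) : Lc l (dx i) = Pi.single i 1 := by
  funext k; simp [dx]

lemma Lc_dy (l : Fin 4 → ℝ) (j : Fin 4) : Lc l (dy j) = (-(l j)) • (Pi.single j 1 : Fin 4 → ℝ) := by
  funext k
  simp only [Lc_apply, dy, Pi.zero_apply, Pi.smul_apply, smul_eq_mul, Pi.single_apply]
  split <;> simp_all


@[simp] lemma dx_fst (m : Fin 4) : (dx m).1 = (Pi.single m 1 : Fin 4 → ℝ) := rfl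
@[simp] lemma dx_snd (m : Fin 4) : (dx m).2 = 0 := rfl
@[simp] lemma dy_fst (m : Fin 4) : (dy m).1 = 0 := rfl
@[simp] lemma dy_snd (m : Fin 4) : (dy m).2 = (Pi.single m 1 : Fin 4 → ℝ) := rfl

variable {T : (Fin 4 → ℝ) → ℝ} {a b l : Fin 4 → ℝ}

lemma theta_mixed (hT : ContDiff ℝ 2 T) (i j : Fin 4) (z : E8) :
    pdv (dx i) (pdv (dy j) (fun z : E8 =>
        (1/2) * ∑ i : Fin 4, ∑ j : Fin 4, (a i * b j - a j * b i) * z.1 i * z.2 j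
          + T (Lc l z))) z =
      (1/2) * (a i * b j - a j * b i)
        - l j * fderiv ℝ (fderiv ℝ T) (Lc l z) (Pi.single i 1) (Pi.single j 1) := by
  have hT1 : Differentiable ℝ T := hT.differentiable two_ne_zero
  have hT' : Differentiable ℝ (fderiv ℝ T) :=
    (hT.fderiv_right (m := 1) (by norm_num)).differentiable one_ne_zero
  have step1 : ∀ w : E8, fderiv ℝ (fun z : E8 =>
      (1/2) * ∑ i : Fin 4, ∑ j : Fin 4, (a i * b j - a j * b i) * z.1 i * z.2 j
        + T (Lc l z)) w (dy j)
      = (1/2) * ∑ i' : Fin 4, (a i' * b j - a j * b i') * w.1 i'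
        - l j * fderiv ℝ T (Lc l w) (Pi.single j 1) := by
    intro w
    have hquad : HasFDerivAt (fun z : E8 =>
        (1/2) * ∑ i : Fin 4, ∑ j : Fin 4, (a i * b j - a j * b i) * z.1 i * z.2 j)
        ((1/2 : ℝ) • ∑ i : Fin 4, ∑ j' : Fin 4,
          (((a i * b j' - a j' * b i) * w.1 i) • Yc j'
            + (w.2 j') • ((a i * b j' - a j' * b i) • Xc i))) w := by
      refine HasFDerivAt.const_mul
        (HasFDerivAt.fun_sum fun i _ => HasFDerivAt.fun_sum fun j' _ => ?_) _
      exact ((Xc i).hasFDerivAt.const_mul _).mul (Yc j').hasFDerivAt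
    have hcomp : HasFDerivAt (fun z : E8 => T (Lc l z))
        ((fderiv ℝ T (Lc l w)).comp (Lc l)) w :=
      ((hT1 (Lc l w)).hasFDerivAt).comp w (Lc l).hasFDerivAt
    rw [(hquad.fun_add hcomp).fderiv]
    simp only [ContinuousLinearMap.add_apply, ContinuousLinearMap.coe_smul',
      Pi.smul_apply, ContinuousLinearMap.coe_sum', Finset.sum_apply,
      Xc_apply, Yc_apply, ContinuousLinearMap.smul_apply,
      ContinuousLinearMap.coe_comp', Function.comp_apply, dy_fst, dy_snd, Pi.zero_apply, Lc_dy, map_smul,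
      smul_eq_mul, mul_zero, add_zero, Pi.single_apply,
      mul_ite, mul_one, Finset.sum_ite_eq', Finset.mem_univ, if_true]
    ring
  have e1 : pdv (dy j) (fun z : E8 =>
      (1/2) * ∑ i : Fin 4, ∑ j : Fin 4, (a i * b j - a j * b i) * z.1 i * z.2 j
        + T (Lc l z))
      = fun w : E8 => (1/2) * ∑ i' : Fin 4, (a i' * b j - a j * b i') * w.1 i'
        - l j * fderiv ℝ T (Lc l w) (Pi.single j 1) := funext step1
  unfold pdv
  rw [show (fun z => (fderiv ℝ (fun z : E8 =>
      (1/2) * ∑ i : Fin 4, ∑ j : Fin 4, (a i * b j - a j * b i) * z.1 i * z.2 j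
        + T (Lc l z)) z) (dy j)) = fun w : E8 =>
      (1/2) * ∑ i' : Fin 4, (a i' * b j - a j * b i') * w.1 i'
        - l j * fderiv ℝ T (Lc l w) (Pi.single j 1) from e1]
  have hlin : HasFDerivAt (fun w : E8 =>
      (1/2) * ∑ i' : Fin 4, (a i' * b j - a j * b i') * w.1 i')
      ((1/2 : ℝ) • ∑ i' : Fin 4, (a i' * b j - a j * b i') • Xc i') z :=
    HasFDerivAt.const_mul
      (HasFDerivAt.fun_sum fun i' _ => (Xc i').hasFDerivAt.const_mul _) _
  have h2 : HasFDerivAt (fun w : E8 => fderiv ℝ T (Lc l w))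
      ((fderiv ℝ (fderiv ℝ T) (Lc l z)).comp (Lc l)) z :=
    ((hT' (Lc l z)).hasFDerivAt).comp z (Lc l).hasFDerivAt
  have h3 : HasFDerivAt (fun w : E8 => fderiv ℝ T (Lc l w) (Pi.single j 1))
      ((ContinuousLinearMap.apply ℝ ℝ (Pi.single j 1 : Fin 4 → ℝ)).comp
        ((fderiv ℝ (fderiv ℝ T) (Lc l z)).comp (Lc l))) z :=
    (ContinuousLinearMap.apply ℝ ℝ (Pi.single j 1 : Fin 4 → ℝ)).hasFDerivAt.comp z h2
  have hfinal : HasFDerivAt (fun w : E8 =>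
      (1/2) * ∑ i' : Fin 4, (a i' * b j - a j * b i') * w.1 i'
        - l j * fderiv ℝ T (Lc l w) (Pi.single j 1))
      ((1/2 : ℝ) • ∑ i' : Fin 4, (a i' * b j - a j * b i') • Xc i'
        - (l j) • ((ContinuousLinearMap.apply ℝ ℝ (Pi.single j 1 : Fin 4 → ℝ)).comp
          ((fderiv ℝ (fderiv ℝ T) (Lc l z)).comp (Lc l)))) z :=
    hlin.sub (h3.const_mul (l j))
  rw [hfinal.fderiv]
  simp only [ContinuousLinearMap.coe_sub', Pi.sub_apply, ContinuousLinearMap.coe_smul',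
    Pi.smul_apply, ContinuousLinearMap.coe_sum', Finset.sum_apply,
    ContinuousLinearMap.smul_apply, Xc_apply, dx_fst, Pi.single_apply,
    ContinuousLinearMap.coe_comp', Function.comp_apply,
    ContinuousLinearMap.apply_apply, Lc_dx, smul_eq_mul,
    mul_ite, mul_one, mul_zero, Finset.sum_ite_eq', Finset.mem_univ, if_true]

lemma omega (hT : ContDiff ℝ 2 T) (Θ : E8 → ℝ)
    (hΘ : ∀ x y : Fin 4 → ℝ, Θ (x, y) =
      (1 / 2) * ∑ i : Fin 4, ∑ j : Fin 4, (a i * b j - a j * b i) * x i * y j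
        + T (fun k => x k - l k * y k))
    (i j : Fin 4) (z : E8) :
    ωc Θ i j z = (a i * b j - a j * b i)
      + (l i - l j) * fderiv ℝ (fderiv ℝ T) (Lc l z) (Pi.single i 1) (Pi.single j 1) := by
  have hT1 : Differentiable ℝ T := hT.differentiable two_ne_zero
  have hT' : Differentiable ℝ (fderiv ℝ T) :=
    (hT.fderiv_right (m := 1) (by norm_num)).differentiable one_ne_zero
  have hΘe : Θ = fun z : E8 =>
      (1 / 2) * ∑ i : Fin 4, ∑ j : Fin 4, (a i * b j - a j * b i) * z.1 i * z.2 j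
        + T (Lc l z) := by
    funext w
    have h1 : (fun k => w.1 k - l k * w.2 k) = Lc l w := by
      funext k; simp
    have h2 := hΘ w.1 w.2
    rw [h1] at h2
    exact h2
  subst hΘe
  unfold ωc
  rw [theta_mixed hT i j z, theta_mixed hT j i z]
  have hsym : fderiv ℝ (fderiv ℝ T) (Lc l z) (Pi.single j 1) (Pi.single i 1)
      = fderiv ℝ (fderiv ℝ T) (Lc l z) (Pi.single i 1) (Pi.single j 1) :=
    second_derivative_symmetric (fun y => (hT1 y).hasFDerivAt)
      ((hT' (Lc l z)).hasFDerivAt) _ _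
  rw [hsym]; ring


lemma dsymm (a b l : Fin 4 → ℝ) (i j : Fin 4) :
    (a j * b i - a i * b j) / (l j - l i) = (a i * b j - a j * b i) / (l i - l j) := by
  rw [show a j * b i - a i * b j = -(a i * b j - a j * b i) by ring,
      show l j - l i = -(l i - l j) by ring, neg_div_neg_eq]

lemma phi_mixed (hT : ContDiff ℝ 2 T) (Φ : (Fin 4 → ℝ) → ℝ)
    (hΦ : ∀ x : Fin 4 → ℝ, Φ x =
      (1 / 2) * ∑ i : Fin 4, ∑ j : Fin 4,
          (if i ≠ j then (a i * b j - a j * b i) * x i * x j / (l i - l j) else 0)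
        + T x)
    (i j : Fin 4) (x : Fin 4 → ℝ) :
    pd2 i j Φ x = (a i * b j - a j * b i) / (l i - l j)
      + fderiv ℝ (fderiv ℝ T) x (Pi.single i 1) (Pi.single j 1) := by
  have hT1 : Differentiable ℝ T := hT.differentiable two_ne_zero
  have hT' : Differentiable ℝ (fderiv ℝ T) :=
    (hT.fderiv_right (m := 1) (by norm_num)).differentiable one_ne_zero
  have hΦe : Φ = fun x : Fin 4 → ℝ =>
      (1 / 2) * ∑ i : Fin 4, ∑ j : Fin 4,
        ((a i * b j - a j * b i) / (l i - l j)) * x i * x j + T x := by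
    funext w
    rw [hΦ w]
    congr 2
    refine Finset.sum_congr rfl fun i _ => Finset.sum_congr rfl fun j _ => ?_
    by_cases h : i = j
    · subst h; simp
    · rw [if_pos h]; ring
  subst hΦe
  have step1 : ∀ w : Fin 4 → ℝ, fderiv ℝ (fun x : Fin 4 → ℝ =>
      (1 / 2) * ∑ i : Fin 4, ∑ j : Fin 4,
        ((a i * b j - a j * b i) / (l i - l j)) * x i * x j + T x) w (Pi.single j 1)
      = ∑ i' : Fin 4, ((a i' * b j - a j * b i') / (l i' - l j)) * w i'
        + fderiv ℝ T w (Pi.single j 1) := by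
    intro w
    have hquad : HasFDerivAt (fun x : Fin 4 → ℝ =>
        (1 / 2) * ∑ i : Fin 4, ∑ j : Fin 4,
          ((a i * b j - a j * b i) / (l i - l j)) * x i * x j)
        ((1/2 : ℝ) • ∑ i : Fin 4, ∑ j' : Fin 4,
          ((((a i * b j' - a j' * b i) / (l i - l j')) * w i)
              • (ContinuousLinearMap.proj j' : (Fin 4 → ℝ) →L[ℝ] ℝ)
            + (w j') • (((a i * b j' - a j' * b i) / (l i - l j'))
              • (ContinuousLinearMap.proj i : (Fin 4 → ℝ) →L[ℝ] ℝ)))) w := by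
      refine HasFDerivAt.const_mul
        (HasFDerivAt.fun_sum fun i _ => HasFDerivAt.fun_sum fun j' _ => ?_) _
      exact ((ContinuousLinearMap.proj i : (Fin 4 → ℝ) →L[ℝ] ℝ).hasFDerivAt.const_mul _).mul
        (ContinuousLinearMap.proj j' : (Fin 4 → ℝ) →L[ℝ] ℝ).hasFDerivAt
    have hTd : HasFDerivAt T (fderiv ℝ T w) w := (hT1 w).hasFDerivAt
    rw [(hquad.fun_add hTd).fderiv]
    simp only [ContinuousLinearMap.add_apply, ContinuousLinearMap.coe_smul', Pi.smul_apply,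
      ContinuousLinearMap.coe_sum', Finset.sum_apply, ContinuousLinearMap.smul_apply,
      ContinuousLinearMap.proj_apply, Pi.single_apply, smul_eq_mul,
      mul_ite, mul_one, mul_zero, Finset.sum_add_distrib, Finset.sum_ite_irrel,
      Finset.sum_const_zero, Finset.sum_ite_eq', Finset.mem_univ, if_true]
    have hswap : ∑ k : Fin 4, w k * ((a j * b k - a k * b j) / (l j - l k))
        = ∑ k : Fin 4, ((a k * b j - a j * b k) / (l k - l j)) * w k :=
      Finset.sum_congr rfl fun k _ => by rw [dsymm a b l k j]; ring
    rw [hswap]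
    ring
  have e1 : pdv (Pi.single j 1) (fun x : Fin 4 → ℝ =>
      (1 / 2) * ∑ i : Fin 4, ∑ j : Fin 4,
        ((a i * b j - a j * b i) / (l i - l j)) * x i * x j + T x)
      = fun w : Fin 4 → ℝ => ∑ i' : Fin 4, ((a i' * b j - a j * b i') / (l i' - l j)) * w i'
        + fderiv ℝ T w (Pi.single j 1) := funext step1
  unfold pd2 pdv
  rw [show (fun z => (fderiv ℝ (fun x : Fin 4 → ℝ =>
      (1 / 2) * ∑ i : Fin 4, ∑ j : Fin 4,
        ((a i * b j - a j * b i) / (l i - l j)) * x i * x j + T x) z) (Pi.single j 1))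
      = fun w : Fin 4 → ℝ => ∑ i' : Fin 4, ((a i' * b j - a j * b i') / (l i' - l j)) * w i'
        + fderiv ℝ T w (Pi.single j 1) from e1]
  have hlin : HasFDerivAt (fun w : Fin 4 → ℝ =>
      ∑ i' : Fin 4, ((a i' * b j - a j * b i') / (l i' - l j)) * w i')
      (∑ i' : Fin 4, ((a i' * b j - a j * b i') / (l i' - l j))
        • (ContinuousLinearMap.proj i' : (Fin 4 → ℝ) →L[ℝ] ℝ)) x :=
    HasFDerivAt.fun_sum fun i' _ =>
      (ContinuousLinearMap.proj i' : (Fin 4 → ℝ) →L[ℝ] ℝ).hasFDerivAt.const_mul _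
  have h3 : HasFDerivAt (fun w : Fin 4 → ℝ => fderiv ℝ T w (Pi.single j 1))
      ((ContinuousLinearMap.apply ℝ ℝ (Pi.single j 1 : Fin 4 → ℝ)).comp
        (fderiv ℝ (fderiv ℝ T) x)) x :=
    (ContinuousLinearMap.apply ℝ ℝ (Pi.single j 1 : Fin 4 → ℝ)).hasFDerivAt.comp x
      ((hT' x).hasFDerivAt)
  have hfinal : HasFDerivAt (fun w : Fin 4 → ℝ =>
      ∑ i' : Fin 4, ((a i' * b j - a j * b i') / (l i' - l j)) * w i'
        + fderiv ℝ T w (Pi.single j 1))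
      (∑ i' : Fin 4, ((a i' * b j - a j * b i') / (l i' - l j))
        • (ContinuousLinearMap.proj i' : (Fin 4 → ℝ) →L[ℝ] ℝ)
        + (ContinuousLinearMap.apply ℝ ℝ (Pi.single j 1 : Fin 4 → ℝ)).comp
          (fderiv ℝ (fderiv ℝ T) x)) x := hlin.add h3
  rw [hfinal.fderiv]
  simp only [ContinuousLinearMap.add_apply, ContinuousLinearMap.coe_sum', Finset.sum_apply,
    ContinuousLinearMap.smul_apply, ContinuousLinearMap.proj_apply, Pi.single_apply,
    smul_eq_mul, mul_ite, mul_one, mul_zero, Finset.sum_ite_eq', Finset.mem_univ, if_true,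
    ContinuousLinearMap.coe_comp', Function.comp_apply, ContinuousLinearMap.apply_apply]

end Stmt13Aux

/-- for pairwise distinct `λ₁,…,λ₄`, with
`Θ(x,y) = ½ Σ_{i,j}(a_i b_j − a_j b_i)x^i y^j + Θ̃(x¹−λ₁y¹,…,x⁴−λ₄y⁴)` and
`Φ(x) = ½ Σ_{i≠j}(a_i b_j − a_j b_i)x^i x^j/(λ_i−λ_j) + Θ̃(x)`, `Θ` satisfies the TED
equation on `ℝ⁸` iff `Φ` satisfies the general heavenly equation on `ℝ⁴`; moreover, the
TED expression of `Θ` at `(x,y)` equals the general heavenly expression of `Φ` at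
`(x¹−λ₁y¹,…,x⁴−λ₄y⁴)`. -/
theorem stmt13 (T : (Fin 4 → ℝ) → ℝ) (hT : ContDiff ℝ 2 T)
    (a b l : Fin 4 → ℝ) (hl : ∀ i j : Fin 4, i ≠ j → l i ≠ l j)
    (Θ : E8 → ℝ)
    (hΘ : ∀ x y : Fin 4 → ℝ, Θ (x, y) =
      (1 / 2) * ∑ i : Fin 4, ∑ j : Fin 4, (a i * b j - a j * b i) * x i * y j
        + T (fun k => x k - l k * y k))
    (Φ : (Fin 4 → ℝ) → ℝ)
    (hΦ : ∀ x : Fin 4 → ℝ, Φ x =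
      (1 / 2) * ∑ i : Fin 4, ∑ j : Fin 4,
          (if i ≠ j then (a i * b j - a j * b i) * x i * x j / (l i - l j) else 0)
        + T x) :
    ((∀ z : E8, tedExpr Θ z = 0) ↔ (∀ x : Fin 4 → ℝ, ghExpr l Φ x = 0)) ∧
      ∀ x y : Fin 4 → ℝ, tedExpr Θ (x, y) = ghExpr l Φ (fun k => x k - l k * y k) := by
  have main : ∀ x y : Fin 4 → ℝ, tedExpr Θ (x, y) = ghExpr l Φ (fun k => x k - l k * y k) := by
    intro x y
    have hu : (fun k => x k - l k * y k) = Stmt13Aux.Lc l (x, y) := by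
      funext k; simp
    have key : ∀ i j : Fin 4, i ≠ j →
        (l i - l j) * pd2 i j Φ (fun k => x k - l k * y k) = ωc Θ i j (x, y) := by
      intro i j hij
      have hne : l i - l j ≠ 0 := sub_ne_zero.mpr (hl i j hij)
      rw [Stmt13Aux.phi_mixed hT Φ hΦ i j, Stmt13Aux.omega hT Θ hΘ i j (x, y), hu]
      field_simp
    have e1 : ghExpr l Φ (fun k => x k - l k * y k)
        = ((l 1 - l 2) * pd2 1 2 Φ (fun k => x k - l k * y k))
            * ((l 0 - l 3) * pd2 0 3 Φ (fun k => x k - l k * y k))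
          + ((l 0 - l 2) * pd2 0 2 Φ (fun k => x k - l k * y k))
            * ((l 3 - l 1) * pd2 3 1 Φ (fun k => x k - l k * y k))
          + ((l 0 - l 1) * pd2 0 1 Φ (fun k => x k - l k * y k))
            * ((l 2 - l 3) * pd2 2 3 Φ (fun k => x k - l k * y k)) := by
      unfold ghExpr; ring
    rw [e1, key 1 2 (by decide), key 0 3 (by decide), key 0 2 (by decide),
        key 3 1 (by decide), key 0 1 (by decide), key 2 3 (by decide)]
    unfold tedExpr
    have anti : ∀ i j : Fin 4, ωc Θ j i (x, y) = -(ωc Θ i j (x, y)) := by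
      intro i j; unfold ωc; ring
    rw [anti 2 0, anti 1 3]
    ring
  refine ⟨⟨fun h x => ?_, fun h z => ?_⟩, main⟩
  · have h0 : (fun k => x k - l k * (0 : Fin 4 → ℝ) k) = x := by
      funext k; simp
    have hx := main x 0
    rw [h0] at hx
    rw [← hx]
    exact h (x, 0)
  · exact (main z.1 z.2).trans (h _)


end
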